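/- arXiv:1911.07213 — 2 statements merged into one kernel-verified Lean document; each statement's English description precedes it below -/
import Mathlib

section
/- (Lemma 1, Grone et al.) Let G = (V,E) be a chordal undirected simple graph on V = {1,…,n} and let C_1,…,C_N be the set of all cliques of G. Then for every X ∈ S^n(E), there exists Y ∈ S^n_{⪰0} with Π_E(Y) = X if and only if the principal submatrix X_{C_i} = P_{C_i} X P_{C_i}ᵀ is positive semidefinite for every i ∈ {1,…,N}. -/
open Matrix

/-- `X` has the sparsity pattern of the graph `G`: every off-diagonal entry
indexed by a non-edge vanishes. -/
def HasSparsity {n : ℕ} (G : SimpleGraph (Fin n)) (X : Matrix (Fin n) (Fin n) ℝ) : Prop :=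
  ∀ i j : Fin n, i ≠ j → ¬ G.Adj i j → X i j = 0

/-- The projection `Π_E` onto the space of matrices with sparsity pattern `G`:
entries outside `Ē = E ∪ {(i,i)}` are set to zero. -/
def sparsityProj {n : ℕ} (G : SimpleGraph (Fin n)) [DecidableRel G.Adj]
    (X : Matrix (Fin n) (Fin n) ℝ) : Matrix (Fin n) (Fin n) ℝ :=
  Matrix.of fun i j => if i = j ∨ G.Adj i j then X i j else 0

/-- The `|C| × n` entry-selection matrix `P_C`: `[P_C]_{h,k} = 1` iff `k` is the
`h`-th smallest element of `C`. -/
def selMat {n : ℕ} (C : Finset (Fin n)) : Matrix (Fin C.card) (Fin n) ℝ :=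
  Matrix.of fun h k => if ((C.orderIsoOfFin rfl h : C) : Fin n) = k then 1 else 0

/-- A clique of `G`: a maximal complete set of vertices. -/
def IsMaxClique {n : ℕ} (G : SimpleGraph (Fin n)) (s : Finset (Fin n)) : Prop :=
  G.IsClique (↑s : Set (Fin n)) ∧
    ∀ t : Finset (Fin n), G.IsClique (↑t : Set (Fin n)) → s ⊆ t → s = t

/-- `G` is chordal: every cycle of length greater than three has a chord, i.e. an
edge of `G` joining two vertices of the cycle that is not an edge of the cycle
(equivalently, joining two nonconsecutive vertices of the cycle). -/
def IsChordal {n : ℕ} (G : SimpleGraph (Fin n)) : Prop :=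
  ∀ (v : Fin n) (c : G.Walk v v), c.IsCycle → 3 < c.length →
    ∃ u w : Fin n, u ∈ c.support ∧ w ∈ c.support ∧ G.Adj u w ∧ s(u, w) ∉ c.edges


section WalkLemmas
set_option linter.unusedSectionVars false
variable {V : Type} [DecidableEq V] {G : SimpleGraph V}
set_option linter.unusedSectionVars false

/-- Chordality for graphs on an arbitrary vertex type. -/
def ChordalAux {W : Type} (G : SimpleGraph W) : Prop :=
  ∀ (v : W) (c : G.Walk v v), c.IsCycle → 3 < c.length →
    ∃ u w : W, u ∈ c.support ∧ w ∈ c.support ∧ G.Adj u w ∧ s(u, w) ∉ c.edges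

/-- A vertex is simplicial if its neighborhood is a clique. -/
def SimpVert {W : Type} (G : SimpleGraph W) (v : W) : Prop :=
  ∀ x y, G.Adj v x → G.Adj v y → x ≠ y → G.Adj x y

lemma exists_min_walk {s t : V} (P : G.Walk s t → Prop) (h : ∃ p, P p) :
    ∃ p, P p ∧ ∀ q, P q → p.length ≤ q.length := by
  classical
  have h' : ∃ n, ∃ p : G.Walk s t, P p ∧ p.length = n := by
    obtain ⟨p, hp⟩ := h; exact ⟨p.length, p, hp, rfl⟩
  obtain ⟨p, hp, hlen⟩ := Nat.find_spec h'
  refine ⟨p, hp, fun q hq => ?_⟩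
  rw [hlen]
  exact Nat.find_le ⟨q, hq, rfl⟩

lemma length_one_edge {x y : V} (p : G.Walk x y) (hne : x ≠ y) (hlen : p.length = 1) :
    s(x, y) ∈ p.edges := by
  obtain ⟨z, h, q, rfl⟩ := SimpleGraph.Walk.exists_eq_cons_of_ne hne p
  have : q.length = 0 := by simpa using hlen
  have hz : z = y := SimpleGraph.Walk.eq_of_length_eq_zero this
  subst hz
  simp

lemma shortcut {s t x y : V} (p : G.Walk s t) (hadj : G.Adj x y)
    (hx : x ∈ p.support) (hy : y ∈ (p.dropUntil x hx).support) :
    s(x, y) ∈ p.edges ∨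
      ∃ q : G.Walk s t, (∀ z ∈ q.support, z ∈ p.support) ∧ q.length < p.length := by
  classical
  set d := p.dropUntil x hx with hd
  set tk := p.takeUntil x hx with htk
  have hlp : tk.length + d.length = p.length := by
    rw [← SimpleGraph.Walk.length_append]; rw [SimpleGraph.Walk.take_spec]
  set d1 := d.takeUntil y hy with hd1
  set d2 := d.dropUntil y hy with hd2
  have hld : d1.length + d2.length = d.length := by
    rw [← SimpleGraph.Walk.length_append]; rw [SimpleGraph.Walk.take_spec]
  rcases Nat.lt_or_ge d1.length 2 with hlt | hge
  · interval_cases h : d1.length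
    · exact absurd (SimpleGraph.Walk.eq_of_length_eq_zero h) hadj.ne
    · left
      exact SimpleGraph.Walk.edges_dropUntil_subset _ _
        (SimpleGraph.Walk.edges_takeUntil_subset _ _ (length_one_edge d1 hadj.ne h))
  · right
    refine ⟨tk.append (SimpleGraph.Walk.cons hadj d2), fun z hz => ?_, ?_⟩
    · rw [SimpleGraph.Walk.mem_support_append_iff] at hz
      rcases hz with hz | hz
      · exact SimpleGraph.Walk.support_takeUntil_subset _ _ hz
      · rw [SimpleGraph.Walk.support_cons] at hz
        rcases List.mem_cons.mp hz with rfl | hz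
        · exact hx
        · exact SimpleGraph.Walk.support_dropUntil_subset _ hx
            (SimpleGraph.Walk.support_dropUntil_subset _ hy hz)
    · rw [SimpleGraph.Walk.length_append, SimpleGraph.Walk.length_cons]
      omega

lemma min_walk_edge {s t : V} (p : G.Walk s t) (T : Set V)
    (hP : ∀ z ∈ p.support, z ∈ T)
    (hmin : ∀ q : G.Walk s t, (∀ z ∈ q.support, z ∈ T) → p.length ≤ q.length)
    {x y : V} (hadj : G.Adj x y) (hx : x ∈ p.support) (hy : y ∈ p.support) :
    s(x, y) ∈ p.edges := by
  classical
  have hsplit : y ∈ (p.takeUntil x hx).support ∨ y ∈ (p.dropUntil x hx).support := by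
    have hy2 : y ∈ ((p.takeUntil x hx).append (p.dropUntil x hx)).support := by
      rw [SimpleGraph.Walk.take_spec]; exact hy
    exact (SimpleGraph.Walk.mem_support_append_iff _ _).mp hy2
  rcases hsplit with hy' | hy'
  · -- y is before x; apply shortcut to the take part with roles swapped
    set tk := p.takeUntil x hx with htk
    have hxend : x ∈ (tk.dropUntil y hy').support := by
      have : x ∈ SimpleGraph.Walk.support (tk.dropUntil y hy') :=
        SimpleGraph.Walk.end_mem_support _
      exact this
    rcases shortcut tk hadj.symm hy' hxend with he | ⟨q, hqsup, hqlen⟩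
    · rw [Sym2.eq_swap] at he
      exact SimpleGraph.Walk.edges_takeUntil_subset _ _ he
    · exfalso
      have hq' : ∀ z ∈ (q.append (p.dropUntil x hx)).support, z ∈ T := by
        intro z hz
        rw [SimpleGraph.Walk.mem_support_append_iff] at hz
        rcases hz with hz | hz
        · exact hP _ (SimpleGraph.Walk.support_takeUntil_subset _ _ (hqsup _ hz))
        · exact hP _ (SimpleGraph.Walk.support_dropUntil_subset _ _ hz)
      have h1 := hmin _ hq'
      rw [SimpleGraph.Walk.length_append] at h1
      have h2 : tk.length + (p.dropUntil x hx).length = p.length := by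
        rw [← SimpleGraph.Walk.length_append]; rw [SimpleGraph.Walk.take_spec]
      omega
  · rcases shortcut p hadj hx hy' with he | ⟨q, hqsup, hqlen⟩
    · exact he
    · exfalso
      have := hmin q (fun z hz => hP _ (hqsup _ hz))
      omega

end WalkLemmas

section Separator
variable {V : Type} [DecidableEq V] (G : SimpleGraph V)

/-- The set of vertices reachable from `a` by walks avoiding `S`. -/
def Side (S : Finset V) (a : V) : Set V :=
  {x | x ∉ S ∧ ∃ w : G.Walk a x, ∀ z ∈ w.support, z ∉ S}

/-- `S` is an `a`-`b` separator. -/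
def IsSep (a b : V) (S : Finset V) : Prop :=
  (∀ x ∈ S, x ≠ a ∧ x ≠ b) ∧ ∀ w : G.Walk a b, ∃ x ∈ w.support, x ∈ S

variable {G}

lemma isSep_symm {a b : V} {S : Finset V} (h : IsSep G a b S) : IsSep G b a S := by
  refine ⟨fun x hx => ⟨(h.1 x hx).2, (h.1 x hx).1⟩, fun w => ?_⟩
  obtain ⟨x, hx, hxS⟩ := h.2 w.reverse
  rw [SimpleGraph.Walk.support_reverse, List.mem_reverse] at hx
  exact ⟨x, hx, hxS⟩

lemma start_mem_side {a b : V} {S : Finset V} (h : IsSep G a b S) : a ∈ Side G S a := by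
  have ha : a ∉ S := fun haS => (h.1 a haS).1 rfl
  exact ⟨ha, SimpleGraph.Walk.nil, by simpa using ha⟩

lemma side_closure {a x y : V} {S : Finset V} (hx : x ∈ Side G S a) (hxy : G.Adj x y)
    (hy : y ∉ S) : y ∈ Side G S a := by
  obtain ⟨hxS, w, hw⟩ := hx
  refine ⟨hy, w.concat hxy, ?_⟩
  intro z hz
  rw [SimpleGraph.Walk.support_concat, List.mem_append] at hz
  rcases hz with hz | hz
  · exact hw z hz
  · simp at hz; subst hz; exact hy

lemma walk_support_mem_side {a x : V} {S : Finset V} (w : G.Walk a x)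
    (hw : ∀ z ∈ w.support, z ∉ S) : ∀ z ∈ w.support, z ∈ Side G S a := by
  intro z hz
  refine ⟨hw z hz, w.takeUntil z hz, fun y hy => ?_⟩
  exact hw y (SimpleGraph.Walk.support_takeUntil_subset _ _ hy)

lemma sides_disjoint {a b x : V} {S : Finset V} (h : IsSep G a b S)
    (hxa : x ∈ Side G S a) (hxb : x ∈ Side G S b) : False := by
  obtain ⟨_, w1, hw1⟩ := hxa
  obtain ⟨_, w2, hw2⟩ := hxb
  obtain ⟨z, hz, hzS⟩ := h.2 (w1.append w2.reverse)
  rw [SimpleGraph.Walk.mem_support_append_iff] at hz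
  rcases hz with hz | hz
  · exact hw1 z hz hzS
  · rw [SimpleGraph.Walk.support_reverse, List.mem_reverse] at hz
    exact hw2 z hz hzS

lemma no_adj_across {a b x y : V} {S : Finset V} (h : IsSep G a b S)
    (hx : x ∈ Side G S a) (hy : y ∈ Side G S b) (hadj : G.Adj x y) : False := by
  have : y ∈ Side G S a := side_closure hx hadj hy.1
  exact sides_disjoint h this hy

lemma neighbor_in_side {a b u : V} {S : Finset V} (hS : IsSep G a b S)
    (hmin : ∀ S', IsSep G a b S' → S.card ≤ S'.card) (hu : u ∈ S) :
    ∃ y ∈ Side G S a, G.Adj u y := by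
  classical
  have hne : a ≠ b := by
    intro h; subst h
    obtain ⟨x, hx, hxS⟩ := hS.2 SimpleGraph.Walk.nil
    simp at hx; subst hx; exact (hS.1 _ hxS).1 rfl
  have herase : ¬ IsSep G a b (S.erase u) := by
    intro h
    have := hmin _ h
    have : (S.erase u).card < S.card := Finset.card_erase_lt_of_mem hu
    omega
  rw [IsSep, not_and_or] at herase
  rcases herase with h1 | h2
  · exact absurd (fun x hx => hS.1 x (Finset.mem_of_mem_erase hx)) h1
  push_neg at h2
  obtain ⟨w0, hw0⟩ := h2
  set p := w0.bypass with hp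
  have hpsup : ∀ z ∈ p.support, z ∉ S.erase u := fun z hz =>
    hw0 z (SimpleGraph.Walk.support_bypass_subset _ hz)
  have hpath : p.IsPath := SimpleGraph.Walk.bypass_isPath w0
  obtain ⟨x, hxsup, hxS⟩ := hS.2 p
  have hxu : x = u := by
    by_contra hne'
    exact hpsup x hxsup (Finset.mem_erase.mpr ⟨hne', hxS⟩)
  subst hxu
  -- decompose the prefix ending at x=u
  set tk := p.takeUntil x hxsup with htk
  have hua : x ≠ a := (hS.1 x hxS).1
  obtain ⟨y, hadj, r, hr⟩ := SimpleGraph.Walk.exists_eq_cons_of_ne hua tk.reverse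
  have hcount : tk.support.count x = 1 :=
    SimpleGraph.Walk.count_support_takeUntil_eq_one p hxsup
  have hxnr : x ∉ r.support := by
    intro hmem
    have : tk.reverse.support = x :: r.support := by rw [hr, SimpleGraph.Walk.support_cons]
    have hc : tk.support.count x ≥ 2 := by
      have h2 : tk.reverse.support.count x ≥ 2 := by
        rw [this, List.count_cons_self]
        have : r.support.count x ≥ 1 := List.count_pos_iff.mpr hmem
        omega
      rw [SimpleGraph.Walk.support_reverse, List.count_reverse] at h2
      exact h2
    omega
  have hrsub : ∀ z ∈ r.support, z ∉ S := by
    intro z hz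
    have hz' : z ∈ tk.support := by
      have : z ∈ tk.reverse.support := by rw [hr, SimpleGraph.Walk.support_cons]; simp [hz]
      rwa [SimpleGraph.Walk.support_reverse, List.mem_reverse] at this
    have hzp : z ∈ p.support := SimpleGraph.Walk.support_takeUntil_subset _ _ hz'
    intro hzS
    have hzu : z ≠ x := fun h => hxnr (h ▸ hz)
    exact hpsup z hzp (Finset.mem_erase.mpr ⟨hzu, hzS⟩)
  refine ⟨y, ?_, hadj⟩
  have hy : y ∈ r.support := SimpleGraph.Walk.start_mem_support r
  exact walk_support_mem_side r.reverse
    (by intro z hz; rw [SimpleGraph.Walk.support_reverse, List.mem_reverse] at hz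
        exact hrsub z hz) y
    (by rw [SimpleGraph.Walk.support_reverse, List.mem_reverse]; exact hy)

end Separator

section SepClique
variable {V : Type} [DecidableEq V] {G : SimpleGraph V}
set_option linter.unusedSectionVars false

lemma sep_clique (hG : ChordalAux G) {a b u v : V} {S : Finset V}
    (hS : IsSep G a b S) (hmin : ∀ S', IsSep G a b S' → S.card ≤ S'.card)
    (hu : u ∈ S) (hv : v ∈ S) (hne : u ≠ v) : G.Adj u v := by
  classical
  by_contra hnAdj
  set A := Side G S a with hA
  set B := Side G S b with hB
  have hSba : IsSep G b a S := isSep_symm hS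
  have hminba : ∀ S', IsSep G b a S' → S.card ≤ S'.card :=
    fun S' h' => hmin S' (isSep_symm h')
  have hdisj : ∀ x, x ∈ A → x ∈ B → False := fun x hxa hxb => sides_disjoint hS hxa hxb
  have hSout : ∀ x ∈ A, x ∉ S := fun x hx => hx.1
  -- walks through each side
  have hexside : ∀ (c : V) (hSc : IsSep G c (if c = a then b else a) S)
      (hminc : ∀ S', IsSep G c (if c = a then b else a) S' → S.card ≤ S'.card),
      ∃ p : G.Walk u v, ∀ z ∈ p.support, z ∈ insert u (insert v (Side G S c)) := by
    intro c hSc hminc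
    obtain ⟨y1, hy1, hadj1⟩ := neighbor_in_side hSc hminc hu
    obtain ⟨y2, hy2, hadj2⟩ := neighbor_in_side hSc hminc hv
    obtain ⟨_, w1, hw1⟩ := hy1
    obtain ⟨_, w2, hw2⟩ := hy2
    refine ⟨SimpleGraph.Walk.cons hadj1 ((w1.reverse.append w2).concat hadj2.symm), ?_⟩
    intro z hz
    rw [SimpleGraph.Walk.support_cons, List.mem_cons] at hz
    rcases hz with rfl | hz
    · exact Set.mem_insert _ _
    rw [SimpleGraph.Walk.support_concat, List.mem_append] at hz
    rcases hz with hz | hz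
    · rw [SimpleGraph.Walk.mem_support_append_iff] at hz
      refine Set.mem_insert_of_mem _ (Set.mem_insert_of_mem _ ?_)
      rcases hz with hz | hz
      · rw [SimpleGraph.Walk.support_reverse, List.mem_reverse] at hz
        exact walk_support_mem_side w1 hw1 z hz
      · exact walk_support_mem_side w2 hw2 z hz
    · rw [List.mem_singleton] at hz; subst hz
      exact Set.mem_insert_of_mem _ (Set.mem_insert _ _)
  -- minimal paths through each side
  have hminpath : ∀ (T : Set V), (∃ p : G.Walk u v, ∀ z ∈ p.support, z ∈ T) →
      ∃ p : G.Walk u v, (∀ z ∈ p.support, z ∈ T) ∧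
        (∀ q : G.Walk u v, (∀ z ∈ q.support, z ∈ T) → p.length ≤ q.length) ∧
        p.IsPath ∧ 2 ≤ p.length := by
    intro T hex
    obtain ⟨p0, hp0, hp0min⟩ := exists_min_walk _ hex
    refine ⟨p0.bypass, fun z hz => hp0 z (SimpleGraph.Walk.support_bypass_subset _ hz),
      fun q hq => le_trans (SimpleGraph.Walk.length_bypass_le _) (hp0min q hq),
      SimpleGraph.Walk.bypass_isPath _, ?_⟩
    set p := p0.bypass
    rcases Nat.lt_or_ge p.length 2 with hlt | hge
    · interval_cases h : p.length
      · exact absurd (SimpleGraph.Walk.eq_of_length_eq_zero h) hne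
      · exact absurd (p.adj_of_mem_edges (length_one_edge p hne h)) hnAdj
    · exact hge
  obtain ⟨pA, hPA, hminA, hpathA, hlA⟩ := hminpath _ (hexside a (by simpa using hS)
    (by simpa using hmin))
  have hbne : ¬ b = a := by
    intro h
    subst h
    obtain ⟨x, hx, hxS⟩ := hS.2 SimpleGraph.Walk.nil
    simp at hx
    subst hx
    exact (hS.1 _ hxS).1 rfl
  obtain ⟨pB, hPB, hminB, hpathB, hlB⟩ := hminpath _ (hexside b (by simpa [hbne] using hSba)
    (by simpa [hbne] using hminba))
  have huA : u ∉ A := fun h => h.1 hu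
  have hvA : v ∉ A := fun h => h.1 hv
  have huB : u ∉ B := fun h => h.1 hu
  have hvB : v ∉ B := fun h => h.1 hv
  have hmemTA : ∀ z ∈ pA.support, z = u ∨ z = v ∨ z ∈ A := by
    intro z hz; have := hPA z hz; simpa using this
  have hmemTB : ∀ z ∈ pB.support, z = u ∨ z = v ∨ z ∈ B := by
    intro z hz; have := hPB z hz; simpa using this
  -- decompose pA
  obtain ⟨x, hux, tA, htA⟩ := SimpleGraph.Walk.exists_eq_cons_of_ne hne pA
  have hxsupA : x ∈ pA.support := by
    rw [htA, SimpleGraph.Walk.support_cons]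
    exact List.mem_cons_of_mem _ (SimpleGraph.Walk.start_mem_support _)
  have hxv : x ≠ v := fun h => hnAdj (h ▸ hux)
  have hxA : x ∈ A := by
    rcases hmemTA x hxsupA with h | h | h
    · exact absurd h hux.ne'
    · exact absurd h hxv
    · exact h
  have htApath : tA.IsPath ∧ u ∉ tA.support := by
    rw [htA, SimpleGraph.Walk.cons_isPath_iff] at hpathA
    exact hpathA
  set q := tA.append pB.reverse with hq
  have hqsupp : q.support = tA.support ++ pB.reverse.support.tail :=
    SimpleGraph.Walk.support_append _ _
  have hBrev : pB.reverse.support = v :: pB.reverse.support.tail :=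
    SimpleGraph.Walk.support_eq_cons _
  have hBrevnodup : pB.reverse.support.Nodup := hpathB.reverse.support_nodup
  have hvtail : v ∉ pB.reverse.support.tail := by
    intro h
    rw [hBrev] at hBrevnodup
    exact (List.nodup_cons.mp hBrevnodup).1 h
  have htailB : ∀ z ∈ pB.reverse.support.tail, z ∈ pB.support := by
    intro z hz
    have : z ∈ pB.reverse.support := by rw [hBrev]; exact List.mem_cons_of_mem _ hz
    rwa [SimpleGraph.Walk.support_reverse, List.mem_reverse] at this
  have htAsub : ∀ z ∈ tA.support, z ∈ pA.support := by
    intro z hz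
    rw [htA, SimpleGraph.Walk.support_cons]
    exact List.mem_cons_of_mem _ hz
  have hBtailnodup : pB.reverse.support.tail.Nodup := by
    rw [hBrev] at hBrevnodup
    exact (List.nodup_cons.mp hBrevnodup).2
  have hqpath : q.IsPath := by
    rw [SimpleGraph.Walk.isPath_def, hqsupp]
    refine List.Nodup.append htApath.1.support_nodup hBtailnodup ?_
    intro z hz1 hz2
    have hzA : z = v ∨ z ∈ A := by
      rcases hmemTA z (htAsub z hz1) with h | h | h
      · exact absurd (h ▸ hz1) htApath.2
      · exact Or.inl h
      · exact Or.inr h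
    rcases hzA with rfl | hzA
    · exact hvtail hz2
    rcases hmemTB z (htailB z hz2) with h | h | h
    · subst h; exact huA hzA
    · subst h; exact hvA hzA
    · exact hdisj z hzA h
  have hedgeq : s(u, x) ∉ q.edges := by
    intro hmem
    rw [hq, SimpleGraph.Walk.edges_append, List.mem_append] at hmem
    rcases hmem with hmem | hmem
    · exact htApath.2 (SimpleGraph.Walk.fst_mem_support_of_mem_edges _ hmem)
    · rw [SimpleGraph.Walk.edges_reverse, List.mem_reverse] at hmem
      have : x ∈ pB.support := SimpleGraph.Walk.snd_mem_support_of_mem_edges _ hmem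
      rcases hmemTB x this with h | h | h
      · exact hux.ne' h
      · exact hxv h
      · exact hdisj x hxA h
  set c := SimpleGraph.Walk.cons hux q with hc
  have hcyc : c.IsCycle := (SimpleGraph.Walk.cons_isCycle_iff q hux).mpr ⟨hqpath, hedgeq⟩
  have hlen : 3 < c.length := by
    have h1 : pA.length = tA.length + 1 := by rw [htA, SimpleGraph.Walk.length_cons]
    have h2 : c.length = q.length + 1 := SimpleGraph.Walk.length_cons _ _
    have h3 : q.length = tA.length + pB.length := by
      rw [hq, SimpleGraph.Walk.length_append, SimpleGraph.Walk.length_reverse]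
    omega
  obtain ⟨x₀, w₀, hx₀, hw₀, hadj₀, hne₀⟩ := hG u c hcyc hlen
  -- membership in the two paths
  have hmemc : ∀ z ∈ c.support, z ∈ pA.support ∨ z ∈ pB.support := by
    intro z hz
    rw [hc, SimpleGraph.Walk.support_cons, List.mem_cons] at hz
    rcases hz with rfl | hz
    · exact Or.inl (SimpleGraph.Walk.start_mem_support _)
    rw [hqsupp, List.mem_append] at hz
    rcases hz with hz | hz
    · exact Or.inl (by rw [htA, SimpleGraph.Walk.support_cons]; exact List.mem_cons_of_mem _ hz)
    · exact Or.inr (htailB z hz)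
  have hedgesc : ∀ e, e ∈ pA.edges ∨ e ∈ pB.edges → e ∈ c.edges := by
    intro e he
    rw [hc, SimpleGraph.Walk.edges_cons, List.mem_cons]
    rcases he with he | he
    · rw [htA, SimpleGraph.Walk.edges_cons, List.mem_cons] at he
      rcases he with he | he
      · exact Or.inl he
      · refine Or.inr ?_
        rw [hq, SimpleGraph.Walk.edges_append, List.mem_append]
        exact Or.inl he
    · refine Or.inr ?_
      rw [hq, SimpleGraph.Walk.edges_append, List.mem_append]
      refine Or.inr ?_
      rw [SimpleGraph.Walk.edges_reverse, List.mem_reverse]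
      exact he
  have hchordA := min_walk_edge pA _ hPA hminA hadj₀
  have hchordB := min_walk_edge pB _ hPB hminB hadj₀
  have huvA : u ∈ pA.support ∧ v ∈ pA.support :=
    ⟨SimpleGraph.Walk.start_mem_support _, SimpleGraph.Walk.end_mem_support _⟩
  have huvB : u ∈ pB.support ∧ v ∈ pB.support :=
    ⟨SimpleGraph.Walk.start_mem_support _, SimpleGraph.Walk.end_mem_support _⟩
  have hsideA : ∀ z ∈ c.support, z ∉ pB.support → z ∈ A := by
    intro z hz hzB
    rcases hmemc z hz with hzA | hzA
    · rcases hmemTA z hzA with h | h | h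
      · exact absurd (h ▸ huvB.1) hzB
      · exact absurd (h ▸ huvB.2) hzB
      · exact h
    · exact absurd hzA hzB
  have hsideB : ∀ z ∈ c.support, z ∉ pA.support → z ∈ B := by
    intro z hz hzA
    rcases hmemc z hz with hzB | hzB
    · exact absurd hzB hzA
    rcases hmemTB z hzB with h | h | h
    · exact absurd (h ▸ huvA.1) hzA
    · exact absurd (h ▸ huvA.2) hzA
    · exact h
  by_cases hxB : x₀ ∈ pB.support <;> by_cases hwB : w₀ ∈ pB.support
  · exact hne₀ (hedgesc _ (Or.inr (hchordB hxB hwB)))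
  · -- w₀ ∈ A side
    have hwA : w₀ ∈ A := hsideA w₀ hw₀ hwB
    by_cases hxA' : x₀ ∈ pA.support
    · rcases hmemc w₀ hw₀ with h | h
      · exact hne₀ (hedgesc _ (Or.inl (hchordA hxA' h)))
      · exact absurd h hwB
    · exact no_adj_across hS hwA (hsideB x₀ hx₀ hxA') hadj₀.symm
  · have hxA' : x₀ ∈ A := hsideA x₀ hx₀ hxB
    by_cases hwA' : w₀ ∈ pA.support
    · rcases hmemc x₀ hx₀ with h | h
      · exact hne₀ (hedgesc _ (Or.inl (hchordA h hwA')))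
      · exact absurd h hxB
    · exact no_adj_across hS hxA' (hsideB w₀ hw₀ hwA') hadj₀
  · rcases hmemc x₀ hx₀ with h | h
    · rcases hmemc w₀ hw₀ with h' | h'
      · exact hne₀ (hedgesc _ (Or.inl (hchordA h h')))
      · exact absurd h' hwB
    · exact absurd h hxB

end SepClique

section Dirac
variable {V : Type}
set_option linter.unusedSectionVars false

lemma chordal_comap {α β : Type} (G : SimpleGraph β) (f : α → β)
    (hf : Function.Injective f) (hG : ChordalAux G) : ChordalAux (G.comap f) := by
  intro v c hcyc hlen
  have hcyc' : (c.map (SimpleGraph.Hom.comap f G)).IsCycle := hcyc.map hf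
  have hlen' : 3 < (c.map (SimpleGraph.Hom.comap f G)).length := by
    rwa [SimpleGraph.Walk.length_map]
  obtain ⟨u, w, hu, hw, hadj, hne⟩ := hG _ _ hcyc' hlen'
  rw [SimpleGraph.Walk.support_map, List.mem_map] at hu hw
  obtain ⟨u', hu', rfl⟩ := hu
  obtain ⟨w', hw', rfl⟩ := hw
  refine ⟨u', w', hu', hw', hadj, fun hmem => hne ?_⟩
  rw [SimpleGraph.Walk.edges_map]
  rw [List.mem_map]
  exact ⟨s(u', w'), hmem, Sym2.map_pair_eq _ _ _⟩

theorem dirac (k : ℕ) : ∀ (V : Type) [Fintype V] [DecidableEq V] (G : SimpleGraph V),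
    Fintype.card V ≤ k → ChordalAux G →
    (∀ a b : V, a ≠ b → G.Adj a b) ∨
      ∃ v w : V, v ≠ w ∧ ¬G.Adj v w ∧ SimpVert G v ∧ SimpVert G w := by
  induction k with
  | zero =>
    intro V _ _ G hcard _
    have hV : IsEmpty V := Fintype.card_eq_zero_iff.mp (le_antisymm hcard (Nat.zero_le _))
    exact Or.inl fun a => (hV.elim a)
  | succ k ih =>
    intro V _ _ G hcard hG
    classical
    by_cases hcomp : ∀ a b : V, a ≠ b → G.Adj a b
    · exact Or.inl hcomp
    push_neg at hcomp
    obtain ⟨a, b, hab, hnadj⟩ := hcomp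
    -- separators exist
    have hsep0 : IsSep G a b (Finset.univ \ {a, b}) := by
      constructor
      · intro x hx
        simp only [Finset.mem_sdiff, Finset.mem_univ, Finset.mem_insert,
          Finset.mem_singleton, true_and] at hx
        exact ⟨fun h => hx (Or.inl h), fun h => hx (Or.inr h)⟩
      · intro w
        cases w with
        | nil => exact absurd rfl hab
        | @cons _ x _ h p =>
          have hxa : x ≠ a := h.ne'
          have hxb : x ≠ b := fun hxb => hnadj (hxb ▸ h)
          refine ⟨x, ?_, ?_⟩
          · rw [SimpleGraph.Walk.support_cons]
            exact List.mem_cons_of_mem _ (SimpleGraph.Walk.start_mem_support _)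
          · simp [hxa, hxb]
    set T := Finset.univ.filter (fun S : Finset V => IsSep G a b S) with hT
    have hTne : T.Nonempty := ⟨Finset.univ \ {a, b}, by
      rw [hT, Finset.mem_filter]
      exact ⟨Finset.mem_univ _, hsep0⟩⟩
    obtain ⟨S, hST, hSmin'⟩ := T.exists_min_image Finset.card hTne
    have hS : IsSep G a b S := by simpa [hT] using hST
    have hmin : ∀ S', IsSep G a b S' → S.card ≤ S'.card := by
      intro S' h'
      exact hSmin' S' (by simp [hT, h'])
    have hSclique : ∀ u v, u ∈ S → v ∈ S → u ≠ v → G.Adj u v :=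
      fun u v hu hv hne => sep_clique hG hS hmin hu hv hne
    -- key: each side contains a simplicial vertex of G
    have key : ∀ (c d : V), IsSep G c d S → (∀ S', IsSep G c d S' → S.card ≤ S'.card) →
        ∃ w ∈ Side G S c, SimpVert G w := by
      intro c d hSc hminc
      set A := Side G S c with hA
      set U : Set V := A ∪ ↑S with hU
      have hdA : d ∉ A := by
        rintro ⟨hdS, w, hw⟩
        obtain ⟨x, hx, hxS⟩ := hSc.2 w
        exact hw x hx hxS
      have hdU : d ∉ U := by
        rintro (h | h)
        · exact hdA h
        · exact (hSc.1 d h).2 rfl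
      haveI : Fintype ↥U := Fintype.ofFinite ↥U
      have hcardU : Fintype.card ↥U ≤ k := by
        have hlt : Fintype.card ↥U < Fintype.card V := by
          apply Fintype.card_lt_of_injective_of_notMem (Subtype.val) Subtype.val_injective
            (b := d)
          rwa [Subtype.range_val]
        omega
      set H := G.comap (Subtype.val : ↥U → V) with hH
      have hHchord : ChordalAux H := chordal_comap G _ Subtype.val_injective hG
      have hnbr : ∀ w : ↥U, (↑w : V) ∈ A → ∀ x, G.Adj ↑w x → x ∈ U := by
        intro w hwA x hx
        by_cases hxS : x ∈ S
        · exact Or.inr hxS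
        · exact Or.inl (side_closure hwA hx hxS)
      have htrans : ∀ w : ↥U, (↑w : V) ∈ A → SimpVert H w → SimpVert G ↑w := by
        intro w hwA hsw x y hx hy hxy
        have hxU : x ∈ U := hnbr w hwA x hx
        have hyU : y ∈ U := hnbr w hwA y hy
        have := hsw ⟨x, hxU⟩ ⟨y, hyU⟩ hx hy (fun h => hxy (congrArg Subtype.val h))
        exact this
      rcases ih ↥U H hcardU hHchord with hcomp' | ⟨v₁, v₂, hne12, hnadj12, hs1, hs2⟩
      · have hcA : c ∈ A := start_mem_side hSc
        refine ⟨c, hcA, htrans ⟨c, Or.inl hcA⟩ hcA ?_⟩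
        intro x y hx hy hxy
        exact hcomp' x y hxy
      · -- at most one of v₁, v₂ lies in S
        have honeA : (↑v₁ : V) ∈ A ∨ (↑v₂ : V) ∈ A := by
          by_contra hc
          push_neg at hc
          have h1S : (↑v₁ : V) ∈ S := by
            rcases v₁.2 with h | h
            · exact absurd h hc.1
            · exact h
          have h2S : (↑v₂ : V) ∈ S := by
            rcases v₂.2 with h | h
            · exact absurd h hc.2
            · exact h
          exact hnadj12 (hSclique _ _ h1S h2S (fun h => hne12 (Subtype.val_injective h)))
        rcases honeA with h | h
        · exact ⟨↑v₁, h, htrans v₁ h hs1⟩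
        · exact ⟨↑v₂, h, htrans v₂ h hs2⟩
    obtain ⟨vA, hvAA, hsA⟩ := key a b hS hmin
    obtain ⟨vB, hvBB, hsB⟩ := key b a (isSep_symm hS) (fun S' h' => hmin S' (isSep_symm h'))
    refine Or.inr ⟨vA, vB, ?_, ?_, hsA, hsB⟩
    · intro h
      exact sides_disjoint hS hvAA (h ▸ hvBB)
    · exact fun h => no_adj_across hS hvAA hvBB h

end Dirac


section RangeLemma
open scoped RealInnerProductSpace

lemma exists_mulVec_eq {ι : Type} [Fintype ι] [DecidableEq ι]
    (A : Matrix ι ι ℝ) (hA : A.IsHermitian) (b : ι → ℝ)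
    (hb : ∀ z, A *ᵥ z = 0 → b ⬝ᵥ z = 0) : ∃ u, A *ᵥ u = b := by
  classical
  set f := Matrix.toEuclideanLin A with hf
  have hsymm : f.IsSymmetric := Matrix.isHermitian_iff_isSymmetric.mp hA
  have hker : ∀ z : EuclideanSpace ℝ ι, z ∈ LinearMap.ker f →
      A *ᵥ (WithLp.equiv 2 (ι → ℝ) z) = 0 := by
    intro z hz
    rw [LinearMap.mem_ker] at hz
    have : (WithLp.equiv 2 (ι → ℝ)) (f z) = 0 := by rw [hz]; rfl
    rw [Matrix.toEuclideanLin_apply] at this; exact this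
  have hle : LinearMap.range f ≤ (LinearMap.ker f)ᗮ := by
    rintro _ ⟨x, rfl⟩
    rw [Submodule.mem_orthogonal]
    intro z hz
    have h1 : ⟪z, f x⟫ = ⟪f z, x⟫ := (hsymm z x).symm
    rw [h1, LinearMap.mem_ker.mp hz, inner_zero_left]
  have hdim : Module.finrank ℝ (LinearMap.range f) =
      Module.finrank ℝ ((LinearMap.ker f)ᗮ) := by
    have h1 := LinearMap.finrank_range_add_finrank_ker f
    have h2 := Submodule.finrank_add_finrank_orthogonal (LinearMap.ker f)
    omega
  have heq : LinearMap.range f = (LinearMap.ker f)ᗮ :=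
    Submodule.eq_of_le_of_finrank_eq hle hdim
  have hbmem : (WithLp.equiv 2 (ι → ℝ)).symm b ∈ (LinearMap.ker f)ᗮ := by
    rw [Submodule.mem_orthogonal]
    intro z hz
    have hz' : A *ᵥ (WithLp.equiv 2 (ι → ℝ) z) = 0 := hker z hz
    have hbz := hb _ hz'
    have h2 : ⟪z, (WithLp.equiv 2 (ι → ℝ)).symm b⟫ =
        dotProduct (star (WithLp.equiv 2 (ι → ℝ) z))
          (WithLp.equiv 2 (ι → ℝ) ((WithLp.equiv 2 (ι → ℝ)).symm b)) :=
      (EuclideanSpace.inner_eq_star_dotProduct _ _).trans (dotProduct_comm _ _)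
    rw [Equiv.apply_symm_apply] at h2
    rw [h2]
    simpa [dotProduct_comm] using hbz
  rw [← heq] at hbmem
  obtain ⟨x, hx⟩ := hbmem
  refine ⟨WithLp.equiv 2 (ι → ℝ) x, ?_⟩
  have : (WithLp.equiv 2 (ι → ℝ)) (f x) = b := by rw [hx]; exact Equiv.apply_symm_apply _ _
  rw [Matrix.toEuclideanLin_apply] at this; exact this

end RangeLemma

section Helpers
variable {W : Type} [Fintype W] [DecidableEq W]
set_option linter.unusedSectionVars false

lemma sum_subtype_of_support (N : Finset W) (g : W → ℝ) (hg : ∀ w ∉ N, g w = 0) :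
    ∑ i : ↥N, g ↑i = ∑ w, g w := by
  rw [Finset.sum_coe_sort N g]
  exact Finset.sum_subset (Finset.subset_univ N) (fun x _ hx => hg x hx)

lemma dot_restrict (N : Finset W) (b z : W → ℝ) (hz : ∀ w ∉ N, z w = 0) :
    b ⬝ᵥ z = (fun i : ↥N => b ↑i) ⬝ᵥ (fun i : ↥N => z ↑i) := by
  rw [dotProduct, dotProduct]
  rw [← sum_subtype_of_support N (fun w => b w * z w) (fun w hw => by simp [hz w hw])]

lemma quad_restrict (N : Finset W) (M : Matrix W W ℝ) (z : W → ℝ)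
    (hz : ∀ w ∉ N, z w = 0) :
    z ⬝ᵥ M *ᵥ z = (fun i : ↥N => z ↑i) ⬝ᵥ
      (M.submatrix (Subtype.val : ↥N → W) Subtype.val) *ᵥ (fun i : ↥N => z ↑i) := by
  rw [dotProduct, dotProduct]
  rw [← sum_subtype_of_support N (fun w => z w * (M *ᵥ z) w)
    (fun w hw => by simp [hz w hw])]
  refine Finset.sum_congr rfl fun i _ => ?_
  congr 1
  rw [Matrix.mulVec, Matrix.mulVec, dotProduct, dotProduct]
  rw [← sum_subtype_of_support N (fun w => M ↑i w * z w)
    (fun w hw => by simp [hz w hw])]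
  rfl

end Helpers

section ExtLemma
variable {W : Type} [Fintype W] [DecidableEq W]
set_option linter.unusedSectionVars false

lemma ext_lemma (M : Matrix W W ℝ) (hM : M.PosSemidef)
    (N : Finset W) (a : ℝ) (b : W → ℝ) (hb : ∀ w ∉ N, b w = 0)
    (hq : ∀ (t : ℝ) (z : W → ℝ), (∀ w ∉ N, z w = 0) →
      0 ≤ a * t ^ 2 + 2 * t * (b ⬝ᵥ z) + z ⬝ᵥ M *ᵥ z) :
    ∃ y : W → ℝ, (∀ w ∈ N, y w = b w) ∧
      ∀ (t : ℝ) (x : W → ℝ), 0 ≤ a * t ^ 2 + 2 * t * (y ⬝ᵥ x) + x ⬝ᵥ M *ᵥ x := by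
  classical
  have hMT : Mᵀ = M := by
    ext i j
    have h := congrFun (congrFun hM.1 i) j
    simpa [Matrix.conjTranspose_apply] using h
  have ha : 0 ≤ a := by
    have := hq 1 0 (fun w _ => rfl)
    simpa using this
  set A := M.submatrix (Subtype.val : ↥N → W) Subtype.val with hA
  have hApsd : A.PosSemidef := hM.submatrix _
  set b' : ↥N → ℝ := fun i => b ↑i with hb'
  -- b' is orthogonal to the kernel of A
  have hbker : ∀ z', A *ᵥ z' = 0 → b' ⬝ᵥ z' = 0 := by
    intro z' hz'
    set zt : W → ℝ := fun w => if h : w ∈ N then z' ⟨w, h⟩ else 0 with hzt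
    have hsupp : ∀ w ∉ N, zt w = 0 := fun w hw => by simp [hzt, hw]
    have hcoe : (fun i : ↥N => zt ↑i) = z' := by
      funext i; simp [hzt, i.2]
    have hdot : b ⬝ᵥ zt = b' ⬝ᵥ z' := by
      rw [dot_restrict N b zt hsupp, hcoe]
    have hquad : zt ⬝ᵥ M *ᵥ zt = 0 := by
      rw [quad_restrict N M zt hsupp, hcoe, ← hA, hz']
      simp
    by_contra hβ
    set β := b' ⬝ᵥ z' with hβdef
    have hkey := hq 1 ((-(a + 1) / (2 * β)) • zt) ?_
    · rw [dotProduct_smul, Matrix.mulVec_smul, dotProduct_smul,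
        smul_dotProduct, hdot, hquad] at hkey
      rw [smul_eq_mul, smul_eq_mul, smul_eq_mul] at hkey
      have hβne : β ≠ 0 := hβ
      have : a + 2 * (-(a + 1) / (2 * β)) * β = -1 := by
        field_simp
        ring
      nlinarith [hkey]
    · intro w hw
      simp [hsupp w hw]
  obtain ⟨u', hu'⟩ := exists_mulVec_eq A hApsd.1 b' hbker
  set ut : W → ℝ := fun w => if h : w ∈ N then u' ⟨w, h⟩ else 0 with hut
  have husupp : ∀ w ∉ N, ut w = 0 := fun w hw => by simp [hut, hw]
  have hucoe : (fun i : ↥N => ut ↑i) = u' := by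
    funext i; simp [hut, i.2]
  set y := M *ᵥ ut with hy
  have hyN : ∀ w ∈ N, y w = b w := by
    intro w hw
    have h1 : (M *ᵥ ut) w = ∑ i : ↥N, M w ↑i * ut ↑i := by
      rw [Matrix.mulVec, dotProduct]
      rw [← sum_subtype_of_support N (fun w' => M w w' * ut w')
        (fun w' hw' => by simp [husupp w' hw'])]
    have h2 : (A *ᵥ u') ⟨w, hw⟩ = ∑ i : ↥N, M w ↑i * u' i := by
      rw [Matrix.mulVec, dotProduct]
      rfl
    rw [hy, h1]
    have h3 : ∑ i : ↥N, M w ↑i * ut ↑i = ∑ i : ↥N, M w ↑i * u' i := by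
      refine Finset.sum_congr rfl fun i _ => ?_
      rw [show ut ↑i = u' i from congrFun hucoe i]
    rw [h3, ← h2, hu']
  -- the central scalar
  set c := ut ⬝ᵥ M *ᵥ ut with hc
  have hbu : b ⬝ᵥ ut = c := by
    rw [dot_restrict N b ut husupp, hucoe, hc, quad_restrict N M ut husupp, hucoe, ← hA, hu']
    exact dotProduct_comm _ _
  have hca : c ≤ a := by
    have := hq (-1) ut husupp
    rw [hbu] at this
    nlinarith [this]
  have hyu : ut ⬝ᵥ y = c := by rw [hy, hc]
  -- symmetric pairing
  have hpair : ∀ x : W → ℝ, ut ⬝ᵥ (M *ᵥ x) = y ⬝ᵥ x := by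
    intro x
    rw [Matrix.dotProduct_mulVec, hy]
    congr 1
    rw [← Matrix.vecMul_transpose, hMT]
  refine ⟨y, hyN, fun t x => ?_⟩
  have hexp : (x + t • ut) ⬝ᵥ M *ᵥ (x + t • ut) =
      x ⬝ᵥ M *ᵥ x + 2 * t * (y ⬝ᵥ x) + t ^ 2 * c := by
    rw [Matrix.mulVec_add, Matrix.mulVec_smul]
    rw [add_dotProduct, smul_dotProduct]
    rw [dotProduct_add, dotProduct_smul, dotProduct_add,
      dotProduct_smul]
    rw [hpair x]
    have hxy : x ⬝ᵥ (M *ᵥ ut) = y ⬝ᵥ x := by rw [← hy]; exact dotProduct_comm _ _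
    rw [hxy, hyu]
    rw [smul_eq_mul, smul_eq_mul, smul_eq_mul]
    ring
  have hpsd := hM.dotProduct_mulVec_nonneg (x + t • ut)
  rw [star_trivial] at hpsd
  have hfinal : a * t ^ 2 + 2 * t * (y ⬝ᵥ x) + x ⬝ᵥ M *ᵥ x =
      (x + t • ut) ⬝ᵥ M *ᵥ (x + t • ut) + (a - c) * t ^ 2 := by
    rw [hexp]; ring
  rw [hfinal]
  have h2 : 0 ≤ (a - c) * t ^ 2 := mul_nonneg (by linarith) (sq_nonneg t)
  exact add_nonneg hpsd h2

end ExtLemma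

section Border
variable {V : Type} [Fintype V] [DecidableEq V]
set_option linter.unusedSectionVars false

lemma sum_split (v : V) (f : V → ℝ) :
    ∑ i, f i = f v + ∑ w : {w : V // w ≠ v}, f ↑w := by
  rw [← Finset.sum_add_sum_compl {v} f, Finset.sum_singleton]
  congr 1
  rw [Finset.sum_subtype ({v}ᶜ : Finset V) (p := fun x => x ≠ v) (fun x => by simp) f]

lemma border_quad (X : Matrix V V ℝ) (v : V) (t : ℝ) (z : {w : V // w ≠ v} → ℝ) :
    (fun i => if h : i = v then t else z ⟨i, h⟩) ⬝ᵥ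
        X *ᵥ (fun i => if h : i = v then t else z ⟨i, h⟩) =
      X v v * t ^ 2 + t * ((fun w : {w : V // w ≠ v} => X v ↑w) ⬝ᵥ z)
        + t * ((fun w : {w : V // w ≠ v} => X ↑w v) ⬝ᵥ z)
        + z ⬝ᵥ (X.submatrix (Subtype.val : {w : V // w ≠ v} → V) Subtype.val) *ᵥ z := by
  set x : V → ℝ := fun i => if h : i = v then t else z ⟨i, h⟩ with hx
  have hxv : x v = t := by simp [hx]
  have hxw : ∀ w : {w : V // w ≠ v}, x ↑w = z w := by
    intro w; simp [hx, w.2]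
  simp only [dotProduct, Matrix.mulVec, Matrix.submatrix_apply]
  rw [sum_split v (fun i => x i * ∑ j, X i j * x j)]
  have hin : ∀ i, ∑ j, X i j * x j = X i v * t + ∑ w : {w : V // w ≠ v}, X i ↑w * z w := by
    intro i
    rw [sum_split v (fun j => X i j * x j), hxv]
    congr 1
    exact Finset.sum_congr rfl fun w _ => by rw [hxw w]
  simp only [hin, hxv, hxw]
  simp only [mul_add]
  rw [Finset.sum_add_distrib]
  have h4 : ∑ w : {w : V // w ≠ v}, z w * (X ↑w v * t) =
      t * ∑ w : {w : V // w ≠ v}, X ↑w v * z w := by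
    rw [Finset.mul_sum]
    exact Finset.sum_congr rfl fun w _ => by ring
  rw [h4]
  ring

lemma dot_quad_congr (M M' : Matrix V V ℝ) (z : V → ℝ)
    (h : ∀ i j, z i ≠ 0 → z j ≠ 0 → M i j = M' i j) :
    z ⬝ᵥ M *ᵥ z = z ⬝ᵥ M' *ᵥ z := by
  rw [dotProduct, dotProduct]
  refine Finset.sum_congr rfl fun i _ => ?_
  by_cases hi : z i = 0
  · rw [hi, zero_mul, zero_mul]
  congr 1
  rw [Matrix.mulVec, Matrix.mulVec, dotProduct, dotProduct]
  refine Finset.sum_congr rfl fun j _ => ?_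
  by_cases hj : z j = 0
  · rw [hj, mul_zero, mul_zero]
  rw [h i j hi hj]

end Border


theorem main_completion (k : ℕ) :
    ∀ (V : Type) [Fintype V] [DecidableEq V] (G : SimpleGraph V),
    Fintype.card V ≤ k → ChordalAux G →
    ∀ X : Matrix V V ℝ, X.IsSymm →
    (∀ i j, i ≠ j → ¬ G.Adj i j → X i j = 0) →
    (∀ z : V → ℝ, ({i | z i ≠ 0}.Pairwise G.Adj) → 0 ≤ z ⬝ᵥ X *ᵥ z) →
    ∃ Y : Matrix V V ℝ, Y.PosSemidef ∧ ∀ i j, (i = j ∨ G.Adj i j) → Y i j = X i j := by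
  induction k with
  | zero =>
    intro V _ _ G hcard _ X _ _ _
    have hV : IsEmpty V := Fintype.card_eq_zero_iff.mp (le_antisymm hcard (Nat.zero_le _))
    refine ⟨X, Matrix.PosSemidef.of_dotProduct_mulVec_nonneg ?_ ?_, fun i j _ => rfl⟩
    · ext i j; exact hV.elim i
    · intro x
      have : x ⬝ᵥ X *ᵥ x = 0 := by
        rw [dotProduct]
        exact Finset.sum_of_isEmpty _
      rw [star_trivial, this]
  | succ k ih =>
    intro V _ _ G hcard hG X hXsymm hXsp hq
    classical
    cases isEmpty_or_nonempty V with
    | inl hV =>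
      refine ⟨X, Matrix.PosSemidef.of_dotProduct_mulVec_nonneg ?_ ?_, fun i j _ => rfl⟩
      · ext i j; exact hV.elim i
      · intro x
        have : x ⬝ᵥ X *ᵥ x = 0 := by
          rw [dotProduct]
          exact Finset.sum_of_isEmpty _
        rw [star_trivial, this]
    | inr hV =>
    -- get a simplicial vertex
    have hsimp : ∃ v, SimpVert G v := by
      rcases dirac (k + 1) V G hcard hG with hcomp | ⟨v, w, _, _, hs, _⟩
      · exact ⟨Classical.arbitrary V, fun x y _ _ hxy => hcomp x y hxy⟩
      · exact ⟨v, hs⟩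
    obtain ⟨v, hv⟩ := hsimp
    have hXs : ∀ i j : V, X j i = X i j := fun i j => congrFun (congrFun hXsymm i) j
    set W := {w : V // w ≠ v} with hW
    have hcardW : Fintype.card W ≤ k := by
      have h1 : Fintype.card W < Fintype.card V := by
        apply Fintype.card_lt_of_injective_of_notMem (Subtype.val) Subtype.val_injective
          (b := v)
        rw [Subtype.range_coe_subtype]
        simp
      omega
    set G' := G.comap (Subtype.val : W → V) with hG'def
    have hG'chord : ChordalAux G' := chordal_comap G _ Subtype.val_injective hG
    set X' := X.submatrix (Subtype.val : W → V) Subtype.val with hX'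
    have hX'symm : X'.IsSymm := by
      ext i j
      simp only [Matrix.transpose_apply, hX', Matrix.submatrix_apply]
      exact hXs _ _
    have hX'sp : ∀ i j : W, i ≠ j → ¬ G'.Adj i j → X' i j = 0 := by
      intro i j hij hnadj
      exact hXsp ↑i ↑j (fun h => hij (Subtype.ext h)) hnadj
    have hq' : ∀ z : W → ℝ, ({i | z i ≠ 0}.Pairwise G'.Adj) → 0 ≤ z ⬝ᵥ X' *ᵥ z := by
      intro z hz
      set zt : V → ℝ := fun i => if h : i = v then 0 else z ⟨i, h⟩ with hzt
      have hq0 := hq zt ?_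
      · have := border_quad X v 0 z
        rw [← hzt] at this
        rw [this] at hq0
        simpa using hq0
      · intro i hi j hj hij
        have hiv : i ≠ v := by
          intro h; subst h; simp [hzt] at hi
        have hjv : j ≠ v := by
          intro h; subst h; simp [hzt] at hj
        have hzi : z ⟨i, hiv⟩ ≠ 0 := by simpa [hzt, hiv] using hi
        have hzj : z ⟨j, hjv⟩ ≠ 0 := by simpa [hzt, hjv] using hj
        exact hz hzi hzj (fun h => hij (congrArg Subtype.val h))
    obtain ⟨Y', hY'psd, hY'pat⟩ := ih W G' hcardW hG'chord X' hX'symm hX'sp hq'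
    set N : Finset W := Finset.univ.filter (fun w : W => G.Adj v ↑w) with hN
    set a := X v v with ha
    set b : W → ℝ := fun w => X v ↑w with hb
    have hbN : ∀ w ∉ N, b w = 0 := by
      intro w hw
      rw [hN, Finset.mem_filter] at hw
      push_neg at hw
      have hnadj : ¬ G.Adj v ↑w := fun h => hw (Finset.mem_univ _) h
      exact hXsp v ↑w (fun h => w.2 h.symm) hnadj
    have hmemN : ∀ w : W, w ∈ N ↔ G.Adj v ↑w := by
      intro w; rw [hN, Finset.mem_filter]; simp
    have hYX' : ∀ (zz : W → ℝ), (∀ w ∉ N, zz w = 0) → zz ⬝ᵥ Y' *ᵥ zz = zz ⬝ᵥ X' *ᵥ zz := by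
      intro zz hzz
      apply dot_quad_congr
      intro i j hi hj
      have hiN : i ∈ N := by by_contra h; exact hi (hzz i h)
      have hjN : j ∈ N := by by_contra h; exact hj (hzz j h)
      by_cases hij : i = j
      · subst hij; exact hY'pat i i (Or.inl rfl)
      · refine hY'pat i j (Or.inr ?_)
        exact hv ↑i ↑j ((hmemN i).mp hiN) ((hmemN j).mp hjN)
          (fun h => hij (Subtype.ext h))
    have hqext : ∀ (t : ℝ) (zz : W → ℝ), (∀ w ∉ N, zz w = 0) →
        0 ≤ a * t ^ 2 + 2 * t * (b ⬝ᵥ zz) + zz ⬝ᵥ Y' *ᵥ zz := by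
      intro t zz hzz
      rw [hYX' zz hzz]
      set xt : V → ℝ := fun i => if h : i = v then t else zz ⟨i, h⟩ with hxt
      have hqx := hq xt ?_
      · have hbq := border_quad X v t zz
        rw [← hxt] at hbq
        rw [hbq] at hqx
        have hco : (fun w : W => X ↑w v) = b := by
          funext w; rw [hb]; exact hXs v ↑w
        rw [hco] at hqx
        calc (0:ℝ) ≤ X v v * t ^ 2 + t * (b ⬝ᵥ zz) + t * (b ⬝ᵥ zz)
            + zz ⬝ᵥ X.submatrix Subtype.val Subtype.val *ᵥ zz := hqx
          _ = a * t ^ 2 + 2 * t * (b ⬝ᵥ zz) + zz ⬝ᵥ X' *ᵥ zz := by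
            rw [ha, hX']; ring
      · intro i hi j hj hij
        simp only [Set.mem_setOf_eq, hxt] at hi hj
        by_cases hiv : i = v
        · subst hiv
          have hjv : j ≠ i := fun h => hij h.symm
          have : zz ⟨j, hjv⟩ ≠ 0 := by simpa [hjv] using hj
          have hjN : (⟨j, hjv⟩ : W) ∈ N := by
            by_contra h; exact this (hzz _ h)
          exact (hmemN _).mp hjN
        · by_cases hjv : j = v
          · subst hjv
            have : zz ⟨i, hiv⟩ ≠ 0 := by simpa [hiv] using hi
            have hiN : (⟨i, hiv⟩ : W) ∈ N := by
              by_contra h; exact this (hzz _ h)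
            exact ((hmemN _).mp hiN).symm
          · have hzi : zz ⟨i, hiv⟩ ≠ 0 := by simpa [hiv] using hi
            have hzj : zz ⟨j, hjv⟩ ≠ 0 := by simpa [hjv] using hj
            have hiN : (⟨i, hiv⟩ : W) ∈ N := by by_contra h; exact hzi (hzz _ h)
            have hjN : (⟨j, hjv⟩ : W) ∈ N := by by_contra h; exact hzj (hzz _ h)
            exact hv i j ((hmemN _).mp hiN) ((hmemN _).mp hjN) hij
    obtain ⟨y, hyN, hyq⟩ := ext_lemma Y' hY'psd N a b hbN hqext
    set Y : Matrix V V ℝ := Matrix.of fun i j =>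
      if hi : i = v then (if hj : j = v then a else y ⟨j, hj⟩)
      else if hj : j = v then y ⟨i, hi⟩ else Y' ⟨i, hi⟩ ⟨j, hj⟩ with hY
    have hYvv : Y v v = a := by simp [hY]
    have hYvw : ∀ w : W, Y v ↑w = y w := by
      intro w; simp [hY, w.2]
    have hYwv : ∀ w : W, Y ↑w v = y w := by
      intro w; simp [hY, w.2]
    have hYww : ∀ w w' : W, Y ↑w ↑w' = Y' w w' := by
      intro w w'; simp [hY, w.2, w'.2]
    have hY'sym : ∀ i j : W, Y' j i = Y' i j := by
      intro i j
      have h := congrFun (congrFun hY'psd.1 i) j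
      simpa [Matrix.conjTranspose_apply] using h
    refine ⟨Y, Matrix.PosSemidef.of_dotProduct_mulVec_nonneg ?_ ?_, ?_⟩
    · -- Hermitian
      ext i j
      simp only [Matrix.conjTranspose_apply, star_trivial]
      by_cases hi : i = v <;> by_cases hj : j = v
      · subst hi; subst hj; rfl
      · subst hi
        rw [hYvw ⟨j, hj⟩, hYwv ⟨j, hj⟩]
      · subst hj
        rw [hYvw ⟨i, hi⟩, hYwv ⟨i, hi⟩]
      · rw [hYww ⟨j, hj⟩ ⟨i, hi⟩, hYww ⟨i, hi⟩ ⟨j, hj⟩]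
        exact hY'sym _ _
    · -- PSD quadratic form
      intro x
      rw [star_trivial]
      have hxeq : x = fun i => if h : i = v then x v else (fun w : W => x ↑w) ⟨i, h⟩ := by
        funext i
        by_cases h : i = v
        · subst h; simp
        · simp [h]
      rw [hxeq]
      rw [border_quad Y v (x v) (fun w : W => x ↑w)]
      have e1 : (fun w : W => Y v ↑w) = y := funext hYvw
      have e2 : (fun w : W => Y ↑w v) = y := funext hYwv
      have e3 : Y.submatrix (Subtype.val : W → V) Subtype.val = Y' := by
        ext w w'; exact hYww w w'
      rw [e1, e2, e3, hYvv]
      have := hyq (x v) (fun w : W => x ↑w)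
      calc (0:ℝ) ≤ a * (x v) ^ 2 + 2 * (x v) * (y ⬝ᵥ fun w : W => x ↑w)
          + (fun w : W => x ↑w) ⬝ᵥ Y' *ᵥ (fun w : W => x ↑w) := this
        _ = a * (x v) ^ 2 + (x v) * (y ⬝ᵥ fun w : W => x ↑w)
          + (x v) * (y ⬝ᵥ fun w : W => x ↑w)
          + (fun w : W => x ↑w) ⬝ᵥ Y' *ᵥ (fun w : W => x ↑w) := by ring
    · -- pattern
      intro i j hij
      by_cases hi : i = v <;> by_cases hj : j = v
      · rw [hi, hj]; exact hYvv
      · have hadj : G.Adj v j := by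
          rcases hij with h | h
          · exact absurd (h ▸ hi) hj
          · exact hi ▸ h
        have hjN : (⟨j, hj⟩ : W) ∈ N := (hmemN _).mpr hadj
        rw [hi, hYvw ⟨j, hj⟩, hyN _ hjN]
      · have hadj : G.Adj v i := by
          rcases hij with h | h
          · exact absurd (h.trans hj) hi
          · exact (hj ▸ h).symm
        have hiN : (⟨i, hi⟩ : W) ∈ N := (hmemN _).mpr hadj
        rw [hj, hYwv ⟨i, hi⟩, hyN _ hiN]
        exact hXs i v
      · rw [hYww ⟨i, hi⟩ ⟨j, hj⟩]
        refine hY'pat _ _ ?_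
        rcases hij with h | h
        · exact Or.inl (Subtype.ext h)
        · exact Or.inr h


section Glue

lemma selMat_conj {n : ℕ} (C : Finset (Fin n)) (X : Matrix (Fin n) (Fin n) ℝ)
    (h k : Fin C.card) :
    (selMat C * X * (selMat C)ᵀ) h k
      = X ((C.orderIsoOfFin rfl h : C) : Fin n) ((C.orderIsoOfFin rfl k : C) : Fin n) := by
  rw [Matrix.mul_apply]
  simp_rw [Matrix.transpose_apply, Matrix.mul_apply, selMat, Matrix.of_apply]
  simp only [ite_mul, one_mul, zero_mul, mul_ite, mul_one, mul_zero, Finset.sum_ite_eq,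
    Finset.mem_univ, if_true]

lemma selMat_eq_submatrix {n : ℕ} (C : Finset (Fin n)) (X : Matrix (Fin n) (Fin n) ℝ) :
    selMat C * X * (selMat C)ᵀ
      = X.submatrix (fun h => ((C.orderIsoOfFin rfl h : C) : Fin n))
          (fun h => ((C.orderIsoOfFin rfl h : C) : Fin n)) := by
  ext h k
  rw [selMat_conj, Matrix.submatrix_apply]

lemma dot_reindex {ι κ : Type} [Fintype ι] [Fintype κ] [DecidableEq κ]
    (X : Matrix κ κ ℝ) (f : ι → κ) (hf : Function.Injective f) (z : κ → ℝ)
    (hsupp : ∀ i, z i ≠ 0 → ∃ h, f h = i) :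
    (z ∘ f) ⬝ᵥ (X.submatrix f f) *ᵥ (z ∘ f) = z ⬝ᵥ X *ᵥ z := by
  classical
  have hsum : ∀ g : κ → ℝ, (∀ i, z i = 0 → g i = 0) → ∑ i, g i = ∑ h, g (f h) := by
    intro g hg
    have h1 : ∑ h : ι, g (f h) = ∑ i ∈ Finset.univ.image f, g i :=
      (Finset.sum_image (fun x _ y _ hxy => hf hxy)).symm
    rw [h1]
    symm
    apply Finset.sum_subset (Finset.subset_univ _)
    intro i _ hi
    apply hg
    by_contra hzi
    obtain ⟨h, rfl⟩ := hsupp i hzi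
    exact hi (Finset.mem_image.mpr ⟨h, Finset.mem_univ _, rfl⟩)
  have hinner : ∀ h0 : ι, ((X.submatrix f f) *ᵥ (z ∘ f)) h0 = (X *ᵥ z) (f h0) := by
    intro h0
    rw [Matrix.mulVec, Matrix.mulVec, dotProduct, dotProduct]
    exact (hsum (fun j => X (f h0) j * z j) (fun i hi => by simp [hi])).symm
  rw [dotProduct, dotProduct]
  rw [hsum (fun i => z i * (X *ᵥ z) i) (fun i hi => by simp [hi])]
  refine Finset.sum_congr rfl fun h0 _ => ?_
  rw [Function.comp_apply, hinner h0]

lemma exists_maxClique {n : ℕ} (G : SimpleGraph (Fin n)) [DecidableRel G.Adj]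
    (s0 : Finset (Fin n)) (h : G.IsClique (↑s0 : Set (Fin n))) :
    ∃ m, IsMaxClique G m ∧ s0 ⊆ m := by
  classical
  set F := Finset.univ.filter
    (fun t : Finset (Fin n) => G.IsClique (↑t : Set (Fin n)) ∧ s0 ⊆ t) with hF
  have hne : F.Nonempty := ⟨s0, by simp [hF, h]⟩
  obtain ⟨m, hmF, hmax⟩ := F.exists_max_image Finset.card hne
  rw [hF, Finset.mem_filter] at hmF
  obtain ⟨-, hmcl, hsub⟩ := hmF
  refine ⟨m, ⟨hmcl, fun t ht hmt => ?_⟩, hsub⟩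
  refine Finset.eq_of_subset_of_card_le hmt (hmax t ?_)
  rw [hF, Finset.mem_filter]
  exact ⟨Finset.mem_univ _, ht, hsub.trans hmt⟩

end Glue

/-- (Grone et al.) For a chordal graph `G`, a symmetric matrix `X` with sparsity
pattern `G` lies in the projection of the PSD cone onto `S^n(E)` iff all its
principal submatrices indexed by the cliques of `G` are PSD. -/
theorem grone_chordal_decomposition {n : ℕ} (G : SimpleGraph (Fin n)) [DecidableRel G.Adj]
    (hG : IsChordal G)
    (X : Matrix (Fin n) (Fin n) ℝ) (hXsymm : X.IsSymm) (hXsp : HasSparsity G X) :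
    (∃ Y : Matrix (Fin n) (Fin n) ℝ, Y.PosSemidef ∧ sparsityProj G Y = X) ↔
      ∀ s : Finset (Fin n), IsMaxClique G s →
        (selMat s * X * (selMat s)ᵀ).PosSemidef := by
  classical
  have hGaux : ChordalAux G := hG
  have hXs : ∀ i j : Fin n, X j i = X i j := fun i j => congrFun (congrFun hXsymm i) j
  constructor
  · rintro ⟨Y, hYpsd, hYproj⟩ s hs
    rw [selMat_eq_submatrix]
    set f : Fin s.card → Fin n := fun h => ((s.orderIsoOfFin rfl h : s) : Fin n) with hf
    have hfs : ∀ h, f h ∈ s := fun h => (s.orderIsoOfFin rfl h).2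
    have hpe : ∀ i j, (i = j ∨ G.Adj i j) → Y i j = X i j := by
      intro i j hij
      have h1 := congrFun (congrFun hYproj i) j
      simpa [sparsityProj, hij] using h1
    have hXY : X.submatrix f f = Y.submatrix f f := by
      ext i j
      simp only [Matrix.submatrix_apply]
      by_cases hij : f i = f j
      · exact (hpe _ _ (Or.inl hij)).symm
      · have hadj : G.Adj (f i) (f j) := hs.1 (hfs i) (hfs j) hij
        exact (hpe _ _ (Or.inr hadj)).symm
    rw [hXY]
    exact hYpsd.submatrix f
  · intro hcl
    have hq : ∀ z : Fin n → ℝ, ({i | z i ≠ 0}.Pairwise G.Adj) → 0 ≤ z ⬝ᵥ X *ᵥ z := by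
      intro z hz
      set s0 := Finset.univ.filter (fun i => z i ≠ 0) with hs0
      have hmem0 : ∀ i, i ∈ s0 ↔ z i ≠ 0 := by
        intro i; rw [hs0, Finset.mem_filter]; simp
      have hclique0 : G.IsClique (↑s0 : Set (Fin n)) := by
        intro i hi j hj hij
        exact hz ((hmem0 i).mp hi) ((hmem0 j).mp hj) hij
      obtain ⟨m, hm, hsub⟩ := exists_maxClique G s0 hclique0
      have hpsd := hcl m hm
      rw [selMat_eq_submatrix] at hpsd
      set f : Fin m.card → Fin n := fun h => ((m.orderIsoOfFin rfl h : m) : Fin n) with hf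
      have hfinj : Function.Injective f := by
        intro h1 h2 e
        exact (m.orderIsoOfFin rfl).injective (Subtype.ext e)
      have hsupp : ∀ i, z i ≠ 0 → ∃ h, f h = i := by
        intro i hi
        have him : i ∈ m := hsub ((hmem0 i).mpr hi)
        refine ⟨(m.orderIsoOfFin rfl).symm ⟨i, him⟩, ?_⟩
        rw [hf]
        simp
      have h2 := hpsd.dotProduct_mulVec_nonneg (z ∘ f)
      rw [star_trivial] at h2
      rwa [dot_reindex X f hfinj z hsupp] at h2
    obtain ⟨Y, hYpsd, hYpat⟩ := main_completion n (Fin n) G (by simp) hGaux X hXsymm hXsp hq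
    refine ⟨Y, hYpsd, ?_⟩
    ext i j
    by_cases hij : i = j ∨ G.Adj i j
    · simp only [sparsityProj, Matrix.of_apply, if_pos hij]
      exact hYpat i j hij
    · simp only [sparsityProj, Matrix.of_apply, if_neg hij]
      push_neg at hij
      exact (hXsp i j hij.1 hij.2).symm
end

section
/- (Existence and uniqueness of the sparse matrix determined by consistent clique submatrices.) Let G = (V,E) be an undirected simple graph on V = {1,…,n} and let C_1,…,C_N ⊆ V be complete sets such that for every pair (h,k) ∈ Ē there is some i with h ∈ C_i and k ∈ C_i. Suppose X_i ∈ S^{|C_i|}, i = 1,…,N, satisfy the consistency constraints P_{C_i ∩ C_j}( P_{C_i}ᵀ X_i P_{C_i} − P_{C_j}ᵀ X_j P_{C_j} ) P_{C_i ∩ C_j}ᵀ = 0 for all i, j ∈ {1,…,N}. Then there exists a unique X ∈ S^n(E) such that P_{C_i} X P_{C_i}ᵀ = X_i for all i ∈ {1,…,N}. -/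
open Matrix

namespace SparseAux

variable {n : ℕ}

def emb (C : Finset (Fin n)) (a : Fin C.card) : Fin n := ((C.orderIsoOfFin rfl a : C) : Fin n)

lemma emb_inj (C : Finset (Fin n)) : Function.Injective (emb C) := by
  intro a b h
  exact (C.orderIsoOfFin rfl).injective (Subtype.ext h)

lemma emb_surj (C : Finset (Fin n)) {h : Fin n} (hh : h ∈ C) : ∃ a, emb C a = h :=
  ⟨(C.orderIsoOfFin rfl).symm ⟨h, hh⟩, by simp [emb]⟩

lemma selMat_apply (C : Finset (Fin n)) (a k) :
    selMat C a k = if emb C a = k then 1 else 0 := rfl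

lemma sel_mul (C : Finset (Fin n)) {m : Type*} [Fintype m] (M : Matrix (Fin n) m ℝ)
    (a : Fin C.card) (k : m) : (selMat C * M) a k = M (emb C a) k := by
  simp [Matrix.mul_apply, selMat_apply, ite_mul]

lemma mul_selT (C : Finset (Fin n)) {m : Type*} [Fintype m] (M : Matrix m (Fin n) ℝ)
    (h : m) (b : Fin C.card) : (M * (selMat C)ᵀ) h b = M h (emb C b) := by
  simp [Matrix.mul_apply, selMat_apply, Matrix.transpose_apply, mul_ite]

lemma sandwich (C : Finset (Fin n)) (M : Matrix (Fin n) (Fin n) ℝ)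
    (a b : Fin C.card) : (selMat C * M * (selMat C)ᵀ) a b = M (emb C a) (emb C b) := by
  rw [mul_selT, sel_mul]

lemma sel_mul_selT (C : Finset (Fin n)) : selMat C * (selMat C)ᵀ = 1 := by
  ext a b
  rw [mul_selT, selMat_apply, Matrix.one_apply]
  simp [(emb_inj C).eq_iff, eq_comm]

end SparseAux

open SparseAux in
/-- (Existence and uniqueness of the sparse matrix determined by consistent
clique submatrices.) If the complete sets `C_1, …, C_N` cover every pair of `Ē`
and the symmetric matrices `X_i` satisfy the consistency constraints on all
overlaps, then there is a unique `X ∈ S^n(E)` whose principal submatrix indexed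
by `C_i` is `X_i`, for every `i`. -/
theorem sparse_matrix_from_consistent_submatrices {n N : ℕ}
    (G : SimpleGraph (Fin n)) (Cs : Fin N → Finset (Fin n))
    (hcomplete : ∀ i, G.IsClique (↑(Cs i) : Set (Fin n)))
    (hcover : ∀ h k : Fin n, (h = k ∨ G.Adj h k) → ∃ i, h ∈ Cs i ∧ k ∈ Cs i)
    (Xi : (i : Fin N) → Matrix (Fin (Cs i).card) (Fin (Cs i).card) ℝ)
    (hXisymm : ∀ i, (Xi i).IsSymm)
    (hconsistent : ∀ i j : Fin N,
      selMat (Cs i ∩ Cs j) *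
        ((selMat (Cs i))ᵀ * Xi i * selMat (Cs i) -
          (selMat (Cs j))ᵀ * Xi j * selMat (Cs j)) *
        (selMat (Cs i ∩ Cs j))ᵀ = 0) :
    ∃! X : Matrix (Fin n) (Fin n) ℝ,
      (X.IsSymm ∧ HasSparsity G X) ∧
      ∀ i, selMat (Cs i) * X * (selMat (Cs i))ᵀ = Xi i := by
  classical
  set D : Fin N → Matrix (Fin n) (Fin n) ℝ :=
    fun i => (selMat (Cs i))ᵀ * Xi i * selMat (Cs i) with hD
  -- recovering Xi from D
  have hrecov : ∀ i, selMat (Cs i) * D i * (selMat (Cs i))ᵀ = Xi i := by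
    intro i
    simp only [hD, ← Matrix.mul_assoc]
    rw [sel_mul_selT, Matrix.one_mul, Matrix.mul_assoc, sel_mul_selT, Matrix.mul_one]
  have hXiD : ∀ i a b, Xi i a b = D i (emb (Cs i) a) (emb (Cs i) b) := by
    intro i a b
    rw [← hrecov i, sandwich]
  -- membership of emb
  have hmem : ∀ (C : Finset (Fin n)) (a : Fin C.card), emb C a ∈ C := by
    intro C a
    exact ((C.orderIsoOfFin rfl a : C)).2
  -- consistency of D on overlaps
  have hDcons : ∀ i j (h k : Fin n), h ∈ Cs i → h ∈ Cs j → k ∈ Cs i → k ∈ Cs j →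
      D i h k = D j h k := by
    intro i j h k hhi hhj hki hkj
    obtain ⟨a, ha⟩ := emb_surj (Cs i ∩ Cs j) (Finset.mem_inter.2 ⟨hhi, hhj⟩)
    obtain ⟨b, hb⟩ := emb_surj (Cs i ∩ Cs j) (Finset.mem_inter.2 ⟨hki, hkj⟩)
    have := congrFun (congrFun (hconsistent i j) a) b
    rw [sandwich] at this
    rw [ha, hb] at this
    simpa [sub_eq_zero] using this
  -- symmetry of D
  have hDsymm : ∀ i (h k : Fin n), D i h k = D i k h := by
    intro i h k
    have : (D i)ᵀ = D i := by
      simp only [hD, Matrix.transpose_mul, Matrix.transpose_transpose, (hXisymm i).eq,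
        Matrix.mul_assoc]
    calc D i h k = (D i)ᵀ k h := rfl
    _ = D i k h := by rw [this]
  -- the matrix
  set X : Matrix (Fin n) (Fin n) ℝ := Matrix.of fun h k =>
    if hc : ∃ i, h ∈ Cs i ∧ k ∈ Cs i then D hc.choose h k else 0 with hX
  have hXval : ∀ (h k : Fin n) (i : Fin N), h ∈ Cs i → k ∈ Cs i → X h k = D i h k := by
    intro h k i hh hk
    have hc : ∃ i, h ∈ Cs i ∧ k ∈ Cs i := ⟨i, hh, hk⟩
    simp only [hX, Matrix.of_apply, dif_pos hc]
    exact hDcons hc.choose i h k hc.choose_spec.1 hh hc.choose_spec.2 hk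
  refine ⟨X, ⟨⟨?_, ?_⟩, ?_⟩, ?_⟩
  · -- symmetry
    ext h k
    simp only [Matrix.transpose_apply]
    by_cases hc : ∃ i, k ∈ Cs i ∧ h ∈ Cs i
    · obtain ⟨i, hki, hhi⟩ := hc
      rw [hXval k h i hki hhi, hXval h k i hhi hki, hDsymm]
    · have hc' : ¬ ∃ i, h ∈ Cs i ∧ k ∈ Cs i := by
        rintro ⟨i, a, b⟩; exact hc ⟨i, b, a⟩
      simp only [hX, Matrix.of_apply, dif_neg hc, dif_neg hc']
  · -- sparsity
    intro h k hne hadj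
    have hc : ¬ ∃ i, h ∈ Cs i ∧ k ∈ Cs i := by
      rintro ⟨i, hh, hk⟩
      exact hadj (hcomplete i hh hk hne)
    simp only [hX, Matrix.of_apply, dif_neg hc]
  · -- submatrices
    intro i
    ext a b
    rw [sandwich, hXval _ _ i (hmem _ a) (hmem _ b), ← hXiD]
  · -- uniqueness
    rintro Y ⟨⟨hYsymm, hYsp⟩, hYsub⟩
    ext h k
    by_cases hc : ∃ i, h ∈ Cs i ∧ k ∈ Cs i
    · obtain ⟨i, hh, hk⟩ := hc
      obtain ⟨a, ha⟩ := emb_surj (Cs i) hh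
      obtain ⟨b, hb⟩ := emb_surj (Cs i) hk
      have := congrFun (congrFun (hYsub i) a) b
      rw [sandwich, ha, hb] at this
      rw [this, hXiD i a b, ha, hb, hXval h k i hh hk]
    · have hne : h ≠ k := by
        rintro rfl
        exact hc (hcover h h (Or.inl rfl))
      have hadj : ¬ G.Adj h k := fun ha => hc (hcover h k (Or.inr ha))
      rw [hYsp h k hne hadj]
      simp only [hX, Matrix.of_apply, dif_neg hc]
end
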